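/- If the generator voltage magnitude is fixed at |V_g| = v > 0, then the power-flow solution satisfies W_Q(P_n) ≥ 0, and the net reactive power is one of the two roots Q_n = (X·v² + √(k_ZV·W_Q(P_n)))/|Z|² or Q_n = (X·v² − √(k_ZV·W_Q(P_n)))/|Z|². -/

import Mathlib

/-- Two-bus power-flow model with fixed generator voltage magnitude `|Vg| = v > 0`.
The power-flow solution satisfies `W_Q(Pn) ≥ 0`, and the net reactive power is one of the
two roots `Qn = (X·v² ± √(k_ZV·W_Q(Pn)))/|Z|²`. -/
theorem net_reactive_power_roots
    (R X Vt v : ℝ) (hR : 0 < R) (hX : 0 < X) (hVt : 0 < Vt) (hv : 0 < v)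
    (Vg : ℂ) (hVg : ‖Vg‖ = v) :
    let Z : ℂ := ⟨R, X⟩
    let Icur : ℂ := (Vg - (Vt : ℂ)) / Z
    let Sn : ℂ := Vg * (starRingEnd ℂ) Icur
    let Pn : ℝ := Sn.re
    let Qn : ℝ := Sn.im
    let Zm : ℝ := ‖Z‖
    let WQ : ℝ → ℝ := fun P =>
      X ^ 2 / Zm ^ 4 - P ^ 2 / v ^ 4 - (v ^ 2 - Vt ^ 2 - 2 * P * R) / (Zm ^ 2 * v ^ 2)
    let kZV : ℝ := Zm ^ 4 * v ^ 4
    0 ≤ WQ Pn ∧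
      (Qn = (X * v ^ 2 + Real.sqrt (kZV * WQ Pn)) / Zm ^ 2 ∨
       Qn = (X * v ^ 2 - Real.sqrt (kZV * WQ Pn)) / Zm ^ 2) := by
  intro Z Icur Sn Pn Qn Zm WQ kZV
  have hab : Vg.re ^ 2 + Vg.im ^ 2 = v ^ 2 := by
    have h := Complex.sq_norm Vg
    rw [hVg] at h
    rw [h, Complex.normSq_apply]; ring
  have hns : Complex.normSq Z = R ^ 2 + X ^ 2 := by
    simp [Z, Complex.normSq_mk]; ring
  have hZ2 : (0:ℝ) < R ^ 2 + X ^ 2 := by positivity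
  have hZm2 : Zm ^ 2 = R ^ 2 + X ^ 2 := by
    rw [show Zm ^ 2 = Complex.normSq Z from (Complex.sq_norm Z), hns]
  have hP : Pn = (R * (v ^ 2 - Vt * Vg.re) + X * Vt * Vg.im) / (R ^ 2 + X ^ 2) := by
    simp only [Pn, Sn, Icur, Complex.mul_re, Complex.mul_im, map_div₀, Complex.div_re,
      Complex.div_im, Complex.sub_re, Complex.sub_im, Complex.ofReal_re, Complex.ofReal_im,
      Complex.conj_re, Complex.conj_im, Complex.normSq_conj, hns]
    show _ = _
    field_simp
    ring_nf
    linear_combination R * hab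
  have hQ : Qn = (X * (v ^ 2 - Vt * Vg.re) - R * Vt * Vg.im) / (R ^ 2 + X ^ 2) := by
    simp only [Qn, Sn, Icur, Complex.mul_re, Complex.mul_im, map_div₀, Complex.div_re,
      Complex.div_im, Complex.sub_re, Complex.sub_im, Complex.ofReal_re, Complex.ofReal_im,
      Complex.conj_re, Complex.conj_im, Complex.normSq_conj, hns]
    show _ = _
    field_simp
    ring_nf
    linear_combination X * hab
  have hkey : (R ^ 2 + X ^ 2) * (Pn ^ 2 + Qn ^ 2)
      = v ^ 2 * (Vt ^ 2 - v ^ 2 + 2 * R * Pn + 2 * X * Qn) := by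
    rw [hP, hQ]
    field_simp
    ring_nf
    linear_combination Vt ^ 2 * (R ^ 2 + X ^ 2) * hab
  have hD : kZV * WQ Pn = ((R ^ 2 + X ^ 2) * Qn - X * v ^ 2) ^ 2 := by
    have hWQv : kZV * WQ Pn = X ^ 2 * v ^ 4 - (R ^ 2 + X ^ 2) ^ 2 * Pn ^ 2
        - (R ^ 2 + X ^ 2) * v ^ 2 * (v ^ 2 - Vt ^ 2 - 2 * Pn * R) := by
      show Zm ^ 4 * v ^ 4 * (X ^ 2 / Zm ^ 4 - Pn ^ 2 / v ^ 4
        - (v ^ 2 - Vt ^ 2 - 2 * Pn * R) / (Zm ^ 2 * v ^ 2)) = _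
      rw [show Zm ^ 4 = (R ^ 2 + X ^ 2) ^ 2 by rw [← hZm2]; ring, hZm2]
      field_simp
    rw [hWQv]
    linear_combination (-(R ^ 2 + X ^ 2)) * hkey
  have hW : 0 ≤ WQ Pn := by
    have hsq := sq_nonneg ((R ^ 2 + X ^ 2) * Qn - X * v ^ 2)
    have hk : (0:ℝ) < kZV := by
      show (0:ℝ) < Zm ^ 4 * v ^ 4
      rw [show Zm ^ 4 = (R ^ 2 + X ^ 2) ^ 2 by rw [← hZm2]; ring]
      positivity
    nlinarith [hD]
  refine ⟨hW, ?_⟩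
  have hsqrt : Real.sqrt (kZV * WQ Pn) = |(R ^ 2 + X ^ 2) * Qn - X * v ^ 2| := by
    rw [hD, Real.sqrt_sq_eq_abs]
  rcases abs_cases ((R ^ 2 + X ^ 2) * Qn - X * v ^ 2) with ⟨h1, h2⟩ | ⟨h1, h2⟩
  · left
    rw [hsqrt, h1, hZm2]
    field_simp
    ring
  · right
    rw [hsqrt, h1, hZm2]
    field_simp
    ring
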